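/- Let p be a prime, δ a derivation of an 𝔽_p-algebra R, K := ker δ, and let {x^{[i]} : 0 ≤ i < p^n} be an iterative δ-descent all of whose elements commute with every element of K. Set x_k := x^{[p^k]} for 0 ≤ k ≤ n−1. Then: (1) the K-subalgebra of R generated by the elements x^{[i]} equals ⊕_{i=0}^{p^n−1} K x^{[i]} (a direct sum of K-modules) and is isomorphic as a K-algebra to K[X_0, …, X_{n−1}]/(X_0^p, …, X_{n−1}^p) via X_k ↦ x_k; moreover x^{[i]} = Π_k x_k^{i_k}/i_k! where i = Σ_k i_k p^k is the p-adic expansion of i; (2) if K is a field, then the restriction of δ to this subalgebra is a simple derivation, i.e., the only δ-stable ideals of the subalgebra are 0 and the whole subalgebra. -/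

import Mathlib

/-- A derivation of a ring: an additive map satisfying the Leibniz rule. -/
def IsDerivation {R : Type*} [Ring R] (δ : R → R) : Prop :=
  (∀ a b : R, δ (a + b) = δ a + δ b) ∧ (∀ a b : R, δ (a * b) = δ a * b + a * δ b)

/-- An iterative sequence `{x^{[i]} : 0 ≤ i < p^n}` in a ring of characteristic `p`
(where by convention `x^{[k]} := 0` for `k ≥ p^n`). -/
def IsIterativeSeq (p n : ℕ) {R : Type*} [Ring R] (x : ℕ → R) : Prop :=
  (∀ k : ℕ, p ^ n ≤ k → x k = 0) ∧
  ∀ i < p ^ n, ∀ j < p ^ n, x i * x j = ((i + j).choose i : R) * x (i + j)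

/-- An iterative `δ`-descent of exponent `n`. -/
def IsIterativeDescent (p n : ℕ) {R : Type*} [Ring R] (δ : R → R) (x : ℕ → R) : Prop :=
  IsIterativeSeq p n x ∧ x 0 = 1 ∧ ∀ i : ℕ, 1 ≤ i → i < p ^ n → δ (x i) = x (i - 1)


lemma aux_digitsum (p : ℕ) (hp : 0 < p) : ∀ (m i : ℕ), i < p ^ m →
    ∑ k ∈ Finset.range m, (i / p ^ k % p) * p ^ k = i := by
  intro m
  induction m with
  | zero => intro i hi; simp at hi; simp [hi]
  | succ m ih =>
    intro i hi
    rw [Finset.sum_range_succ']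
    have h1 : ∀ k, i / p ^ (k+1) % p * p ^ (k+1) = p * (i / p / p ^ k % p * p ^ k) := by
      intro k
      rw [pow_succ', Nat.div_div_eq_div_mul]
      ring
    simp only [h1]
    rw [← Finset.mul_sum, ih (i / p) (Nat.div_lt_of_lt_mul (by rw [← pow_succ'] ; exact hi))]
    have := Nat.div_add_mod i p
    simp only [pow_zero, Nat.div_one, mul_one]
    omega

lemma aux_sumlt (p : ℕ) (hp : 0 < p) (d : ℕ → ℕ) (hd : ∀ k, d k < p) :
    ∀ m, ∑ k ∈ Finset.range m, d k * p ^ k < p ^ m := by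
  intro m
  induction m with
  | zero => simp
  | succ m ih =>
    rw [Finset.sum_range_succ]
    have h1 : d m * p ^ m ≤ (p - 1) * p ^ m :=
      Nat.mul_le_mul_right _ (by have := hd m; omega)
    have h2 : p ^ m + (p-1) * p ^ m = p ^ (m+1) := by
      rw [pow_succ, Nat.sub_one_mul]
      have h3 : p ^ m ≤ p * p ^ m := Nat.le_mul_of_pos_left _ hp
      rw [mul_comm (p ^ m) p]
      omega
    omega

lemma aux_extract (p : ℕ) (hp : 0 < p) : ∀ (m : ℕ) (d : ℕ → ℕ), (∀ k, d k < p) →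
    ∀ j < m, (∑ k ∈ Finset.range m, d k * p ^ k) / p ^ j % p = d j := by
  intro m
  induction m with
  | zero => intro d hd j hj; omega
  | succ m ih =>
    intro d hd j hj
    have hrw : ∑ k ∈ Finset.range (m+1), d k * p ^ k
        = d 0 + p * ∑ k ∈ Finset.range m, d (k+1) * p ^ k := by
      rw [Finset.sum_range_succ', Finset.mul_sum]
      simp only [pow_succ']
      simp [mul_comm, mul_assoc, mul_left_comm]
      ring_nf
    rw [hrw]
    cases j with
    | zero =>
      simp only [pow_zero, Nat.div_one]
      rw [Nat.add_mul_mod_self_left]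
      exact Nat.mod_eq_of_lt (hd 0)
    | succ j =>
      rw [pow_succ', ← Nat.div_div_eq_div_mul]
      rw [Nat.add_mul_div_left _ _ hp, Nat.div_eq_of_lt (hd 0), zero_add]
      exact ih (fun k => d (k+1)) (fun k => hd (k+1)) j (by have := hd m; omega)


lemma aux_lucas_step (p : ℕ) (hp : p.Prime) (n k : ℕ) :
    ((n.choose k : ZMod p)) = ((n % p).choose (k % p) : ZMod p) * ((n / p).choose (k / p) : ZMod p) := by
  haveI := Fact.mk hp
  have := @Choose.choose_modEq_choose_mod_mul_choose_div_nat n k p _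
  rw [← Nat.cast_mul]
  exact_mod_cast (ZMod.natCast_eq_natCast_iff _ _ _).mpr this

lemma aux_lucas_pow (p : ℕ) (hp : p.Prime) : ∀ (k a b : ℕ),
    (((a * p ^ k).choose (b * p ^ k) : ZMod p)) = (a.choose b : ZMod p) := by
  intro k
  induction k with
  | zero => simp
  | succ k ih =>
    intro a b
    rw [aux_lucas_step p hp]
    have h1 : ∀ c : ℕ, c * p ^ (k+1) % p = 0 := by
      intro c; rw [pow_succ, ← mul_assoc]; exact Nat.mul_mod_left _ _
    have h2 : ∀ c : ℕ, c * p ^ (k+1) / p = c * p ^ k := by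
      intro c; rw [pow_succ, ← mul_assoc]; exact Nat.mul_div_cancel _ hp.pos
    rw [h1, h1, h2, h2, ih]
    simp

lemma aux_lucas_one (p : ℕ) (hp : p.Prime) (k m : ℕ) :
    (((m * p ^ k).choose (p ^ k) : ZMod p)) = (m : ZMod p) := by
  have := aux_lucas_pow p hp k m 1
  rw [one_mul] at this
  rw [this, Nat.choose_one_right]

lemma aux_lucas_nocarry (p : ℕ) (hp : p.Prime) : ∀ (k a b : ℕ), a < p ^ k →
    (((a + b * p ^ k).choose a : ZMod p)) = 1 := by
  intro k
  induction k with
  | zero =>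
    intro a b ha
    have : a = 0 := by simpa using ha
    simp [this]
  | succ k ih =>
    intro a b ha
    rw [aux_lucas_step p hp]
    have h1 : (a + b * p ^ (k+1)) % p = a % p := by
      rw [pow_succ, ← mul_assoc]; exact Nat.add_mul_mod_self_right _ _ _
    have h2 : (a + b * p ^ (k+1)) / p = a / p + b * p ^ k := by
      rw [pow_succ, ← mul_assoc]; exact Nat.add_mul_div_right _ _ hp.pos
    rw [h1, h2, Nat.choose_self, ih (a / p) b (Nat.div_lt_of_lt_mul (by rw [← pow_succ']; exact ha))]
    simp


lemma aux_cast {R : Type*} [Ring R] (p : ℕ) [CharP R p] (a b : ℕ)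
    (h : (a : ZMod p) = b) : (a : R) = b := by
  have h2 : a ≡ b [MOD p] := (ZMod.natCast_eq_natCast_iff a b p).mp h
  exact (CharP.natCast_eq_natCast R p).mpr h2

lemma aux_castjuggle {R : Type*} [Ring R] (a b : ℕ) (X Y : R) :
    (a : R) * X * ((b : R) * Y) = ((a * b : ℕ) : R) * (X * Y) := by
  have h := (Nat.cast_commute b X)
  push_cast
  rw [mul_assoc, ← mul_assoc X, ← h.eq, mul_assoc, ← mul_assoc, ← mul_assoc]

section
variable {R : Type*} [Ring R] (p n : ℕ) (hp : p.Prime) [CharP R p] (x : ℕ → R)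
  (hx0 : x 0 = 1) (hxz : ∀ k, p ^ n ≤ k → x k = 0)
  (hxm : ∀ i < p ^ n, ∀ j < p ^ n, x i * x j = ((i + j).choose i : R) * x (i + j))

include hxz hxm in
lemma aux_xcomm : ∀ i j, Commute (x i) (x j) := by
  intro i j
  rcases lt_or_ge i (p ^ n) with hi | hi
  · rcases lt_or_ge j (p ^ n) with hj | hj
    · show x i * x j = x j * x i
      rw [hxm i hi j hj, hxm j hj i hi, add_comm j i, Nat.choose_symm_add]
    · rw [hxz j hj]; exact Commute.zero_right _
  · rw [hxz i hi]; exact Commute.zero_left _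

include hp hx0 hxz hxm in
lemma aux_powEq (e : ℕ) (he : p ^ e < p ^ n) : ∀ j, j ≤ p →
    x (p ^ e) ^ j = (j.factorial : R) * x (j * p ^ e) := by
  intro j
  induction j with
  | zero => intro _; simp [hx0]
  | succ j ih =>
    intro hj
    rw [pow_succ, ih (by omega)]
    rcases lt_or_ge (j * p ^ e) (p ^ n) with hlt | hge
    · rw [mul_assoc, hxm _ hlt _ he]
      have harith : j * p ^ e + p ^ e = (j + 1) * p ^ e := by ring
      have hC : (((j * p ^ e + p ^ e).choose (j * p ^ e) : ℕ) : R) = ((j+1 : ℕ) : R) := by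
        apply aux_cast p
        have hsymm : (j * p ^ e + p ^ e).choose (j * p ^ e) = ((j+1) * p ^ e).choose (p ^ e) := by
          rw [harith]
          have := Nat.choose_symm (n := (j+1) * p ^ e) (k := j * p ^ e)
            (by nlinarith [Nat.pos_of_ne_zero (pow_ne_zero e hp.ne_zero)])
          rw [← this]
          congr 1
          have : (j+1) * p ^ e = j * p ^ e + p ^ e := by ring
          omega
        rw [hsymm]
        exact aux_lucas_one p hp e (j+1)
      rw [hC, harith]
      rw [← mul_assoc, ← Nat.cast_mul]
      congr 2
      rw [Nat.factorial_succ]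
      ring
    · have h1 : x (j * p ^ e) = 0 := hxz _ hge
      have h2 : x ((j+1) * p ^ e) = 0 := hxz _ (le_trans hge (Nat.mul_le_mul_right _ (by omega)))
      simp [h1, h2]

include hp hx0 hxz hxm in
lemma aux_xpow_p (e : ℕ) : x (p ^ e) ^ p = 0 := by
  rcases lt_or_ge (p ^ e) (p ^ n) with he | he
  · rw [aux_powEq p n hp x hx0 hxz hxm e he p le_rfl]
    have : ((p.factorial : ℕ) : R) = 0 :=
      (CharP.cast_eq_zero_iff R p _).mpr (Nat.dvd_factorial hp.pos le_rfl)
    rw [this, zero_mul]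
  · rw [hxz _ he, zero_pow hp.ne_zero]

end
section
variable {R : Type*} [Ring R] (p n : ℕ) (hp : p.Prime) [CharP R p] (x : ℕ → R)
  (hx0 : x 0 = 1) (hxz : ∀ k, p ^ n ≤ k → x k = 0)
  (hxm : ∀ i < p ^ n, ∀ j < p ^ n, x i * x j = ((i + j).choose i : R) * x (i + j))
  (finv : ℕ → R) (hfinv : ∀ m : ℕ, finv m = ZMod.castHom (dvd_refl p) R ((m.factorial : ZMod p)⁻¹))

include hp hx0 hxz hxm in
lemma aux_prodML : ∀ m, m ≤ n → ∀ d : ℕ → ℕ, (∀ k, d k < p) →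
    ((List.range m).map fun k => x (p ^ k) ^ d k).prod
      = ((∏ k ∈ Finset.range m, (d k).factorial : ℕ) : R)
        * x (∑ k ∈ Finset.range m, d k * p ^ k) := by
  intro m
  induction m with
  | zero => intro _ d hd; simp [hx0]
  | succ m ih =>
    intro hm d hd
    rw [List.range_succ, List.map_append, List.prod_append]
    simp only [List.map_singleton, List.prod_singleton]
    rw [ih (by omega) d hd]
    rw [aux_powEq p n hp x hx0 hxz hxm m (Nat.pow_lt_pow_right hp.one_lt (by omega)) (d m)
      (le_of_lt (hd m))]
    rw [aux_castjuggle]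
    have hs : (∑ k ∈ Finset.range m, d k * p ^ k) < p ^ m := aux_sumlt p hp.pos d hd m
    have hs' : (∑ k ∈ Finset.range m, d k * p ^ k) < p ^ n :=
      lt_of_lt_of_le hs (Nat.pow_le_pow_right hp.pos (by omega))
    have hdm : d m * p ^ m < p ^ n := by
      calc d m * p ^ m < p * p ^ m :=
            (Nat.mul_lt_mul_right (Nat.pos_of_ne_zero (pow_ne_zero m hp.ne_zero))).mpr (hd m)
        _ = p ^ (m+1) := (pow_succ' p m).symm
        _ ≤ p ^ n := Nat.pow_le_pow_right hp.pos hm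
    rw [hxm _ hs' _ hdm]
    have hC : ((((∑ k ∈ Finset.range m, d k * p ^ k) + d m * p ^ m).choose
        (∑ k ∈ Finset.range m, d k * p ^ k) : ℕ) : R) = ((1 : ℕ) : R) := by
      apply aux_cast p
      rw [aux_lucas_nocarry p hp m _ (d m) hs]
      simp
    rw [← mul_assoc, hC, Nat.cast_one, mul_one, Finset.prod_range_succ, Finset.sum_range_succ]

lemma aux_listpull {R' : Type*} [Ring R'] (c f : ℕ → R') (hc : ∀ k r, Commute (c k) r) :
    ∀ m, ((List.range m).map fun k => c k * f k).prod
       = ((List.range m).map c).prod * ((List.range m).map f).prod := by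
  intro m
  induction m with
  | zero => simp
  | succ m ih =>
    rw [List.range_succ]
    simp only [List.map_append, List.prod_append, List.map_singleton, List.prod_singleton]
    rw [ih, mul_assoc, ← mul_assoc (((List.range m).map f).prod), ← (hc m _).eq,
      mul_assoc, ← mul_assoc, ← mul_assoc]

include hp hfinv in
lemma aux_finv_comm (m : ℕ) (r : R) : Commute (finv m) r := by
  haveI : NeZero p := ⟨hp.ne_zero⟩
  have hv : (((((m.factorial : ZMod p))⁻¹).val : ℕ) : ZMod p) = ((m.factorial : ZMod p))⁻¹ :=
    ZMod.natCast_rightInverse _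
  rw [hfinv m, ← hv, map_natCast]
  exact Nat.cast_commute _ r

include hp hfinv in
lemma aux_finv_fact (m : ℕ) (hm : m < p) : finv m * ((m.factorial : ℕ) : R) = 1 := by
  haveI := Fact.mk hp
  have hnz : ((m.factorial : ZMod p)) ≠ 0 := by
    rw [Ne, ZMod.natCast_eq_zero_iff]
    intro hdvd
    exact absurd ((Nat.Prime.dvd_factorial hp).mp hdvd) (by omega)
  rw [hfinv m, ← map_natCast (ZMod.castHom (dvd_refl p) R) (m.factorial), ← map_mul,
    inv_mul_cancel₀ hnz, map_one]

include hp hfinv in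
lemma aux_finvprod (d : ℕ → ℕ) (hd : ∀ k, d k < p) : ∀ m,
    ((List.range m).map fun k => finv (d k)).prod
      * ((∏ k ∈ Finset.range m, (d k).factorial : ℕ) : R) = 1 := by
  intro m
  induction m with
  | zero => simp
  | succ m ih =>
    rw [List.range_succ, Finset.prod_range_succ]
    simp only [List.map_append, List.prod_append, List.map_singleton, List.prod_singleton]
    rw [Nat.cast_mul, mul_assoc, ← mul_assoc (finv (d m)),
      (aux_finv_comm p hp finv hfinv (d m) _).eq, mul_assoc,
      aux_finv_fact p hp finv hfinv (d m) (hd m), mul_one]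
    exact ih

include hp hx0 hxz hxm hfinv in
lemma aux_c3 (i : ℕ) (hi : i < p ^ n) :
    x i = ((List.range n).map fun k =>
      finv (i / p ^ k % p) * x (p ^ k) ^ (i / p ^ k % p)).prod := by
  have hd : ∀ k, i / p ^ k % p < p := fun k => Nat.mod_lt _ hp.pos
  rw [aux_listpull (fun k => finv (i / p ^ k % p)) (fun k => x (p ^ k) ^ (i / p ^ k % p))
    (fun k r => aux_finv_comm p hp finv hfinv _ r) n]
  rw [aux_prodML p n hp x hx0 hxz hxm n le_rfl _ hd]
  rw [← mul_assoc, aux_finvprod p hp finv hfinv _ hd n, aux_digitsum p hp.pos n i hi, one_mul]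

end
section
variable {R : Type*} [Ring R] (p n : ℕ) (hp : p.Prime) [CharP R p]
  (δ : R → R) (hadd : ∀ a b : R, δ (a + b) = δ a + δ b)
  (hmul : ∀ a b : R, δ (a * b) = δ a * b + a * δ b)
  (x : ℕ → R)
  (hx0 : x 0 = 1) (hxz : ∀ k, p ^ n ≤ k → x k = 0)
  (hxm : ∀ i < p ^ n, ∀ j < p ^ n, x i * x j = ((i + j).choose i : R) * x (i + j))
  (hxd : ∀ i, 1 ≤ i → i < p ^ n → δ (x i) = x (i - 1))

include hadd in
lemma aux_d0 : δ 0 = 0 := by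
  have h := hadd 0 0
  rw [add_zero] at h
  have h2 : δ 0 + 0 = δ 0 + δ 0 := by rw [add_zero]; exact h
  exact (add_left_cancel h2).symm

include hadd hmul in
lemma aux_d1 : δ 1 = 0 := by
  have h := hmul 1 1
  simp only [mul_one, one_mul] at h
  have h2 : δ 1 + 0 = δ 1 + δ 1 := by rw [add_zero]; exact h
  exact (add_left_cancel h2).symm

include hadd hmul in
lemma aux_dnat : ∀ m : ℕ, δ (m : R) = 0 := by
  intro m
  induction m with
  | zero => simpa using aux_d0 δ hadd
  | succ m ih =>
    push_cast
    rw [hadd, ih, aux_d1 δ hadd hmul, add_zero]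

include hadd hmul hx0 hxd in
lemma aux_LI : ∀ t, t ≤ p ^ n → ∀ c : ℕ → R, (∀ j, δ (c j) = 0) →
    ∑ j ∈ Finset.range t, c j * x j = 0 → ∀ j < t, c j = 0 := by
  intro t
  induction t with
  | zero => intro _ c _ _ j hj; omega
  | succ t ih =>
    intro ht c hc h
    set D : R →+ R := AddMonoidHom.mk' δ hadd with hD
    have hDa : ∀ r, D r = δ r := fun r => rfl
    have hterm : ∀ j, δ (c j * x j) = c j * δ (x j) := by
      intro j
      rw [hmul, hc j, zero_mul, zero_add]
    have hsum : ∑ j ∈ Finset.range (t+1), c j * δ (x j) = 0 := by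
      have h1 : δ (∑ j ∈ Finset.range (t+1), c j * x j) = 0 := by
        rw [h]; exact aux_d0 δ hadd
      rw [← hDa, map_sum] at h1
      simp only [hDa, hterm] at h1
      exact h1
    have hshift : ∑ j ∈ Finset.range t, c (j+1) * x j = 0 := by
      rw [Finset.sum_range_succ'] at hsum
      have h0 : c 0 * δ (x 0) = 0 := by
        rw [hx0, aux_d1 δ hadd hmul, mul_zero]
      rw [h0, add_zero] at hsum
      rw [← hsum]
      apply Finset.sum_congr rfl
      intro j hj
      rw [hxd (j+1) (by omega) (by simp at hj; omega)]
      simp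
    have hpos : ∀ j < t, c (j+1) = 0 :=
      ih (by omega) (fun j => c (j+1)) (fun j => hc (j+1)) hshift
    intro j hj
    rcases Nat.eq_zero_or_pos j with rfl | hjpos
    · rw [Finset.sum_range_succ'] at h
      have hz : ∀ j ∈ Finset.range t, c (j+1) * x (j+1) = 0 := by
        intro j hj'
        simp at hj'
        rw [hpos j hj', zero_mul]
      rw [Finset.sum_congr rfl hz] at h
      simpa [hx0] using h
    · have := hpos (j-1) (by omega)
      have hj1 : j - 1 + 1 = j := by omega
      rwa [hj1] at this

end
section
variable {R : Type*} [Ring R] (p n : ℕ) [CharP R p]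
  (K : Subring R) (x : ℕ → R)
  (hxz : ∀ k, p ^ n ≤ k → x k = 0)
  (hxm : ∀ i < p ^ n, ∀ j < p ^ n, x i * x j = ((i + j).choose i : R) * x (i + j))
  (hcomm : ∀ i < p ^ n, ∀ a ∈ K, x i * a = a * x i)

include hxz hxm hcomm in
lemma aux_prodclosed (c c' : Fin (p ^ n) → R) (hc : ∀ j, c j ∈ K) (hc' : ∀ j, c' j ∈ K) :
    ∃ c'' : Fin (p ^ n) → R, (∀ j, c'' j ∈ K) ∧
      (∑ j : Fin (p ^ n), c j * x (j : ℕ)) * (∑ j : Fin (p ^ n), c' j * x (j : ℕ))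
        = ∑ j : Fin (p ^ n), c'' j * x (j : ℕ) := by
  classical
  refine ⟨fun t => ∑ j : Fin (p ^ n), ∑ m : Fin (p ^ n),
    if (j : ℕ) + (m : ℕ) = (t : ℕ) then c j * c' m * (((t : ℕ).choose (j : ℕ) : ℕ) : R) else 0,
    ?_, ?_⟩
  · intro t
    apply Subring.sum_mem
    intro j _
    apply Subring.sum_mem
    intro m _
    by_cases hjm : (j : ℕ) + (m : ℕ) = (t : ℕ)
    · rw [if_pos hjm]
      exact mul_mem (mul_mem (hc j) (hc' m)) (natCast_mem K _)
    · rw [if_neg hjm]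
      exact zero_mem K
  · rw [Finset.sum_mul_sum]
    simp only [Finset.sum_mul, ite_mul, zero_mul]
    conv_rhs => rw [Finset.sum_comm]
    refine Finset.sum_congr rfl fun j _ => ?_
    conv_rhs => rw [Finset.sum_comm]
    refine Finset.sum_congr rfl fun m _ => ?_
    have hpt : (c j * x (j : ℕ)) * (c' m * x (m : ℕ))
        = c j * c' m * ((((j : ℕ) + (m : ℕ)).choose (j : ℕ) : ℕ) : R) * x ((j : ℕ) + (m : ℕ)) := by
      have h1 : x (j : ℕ) * c' m = c' m * x (j : ℕ) := hcomm _ j.isLt _ (hc' m)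
      calc c j * x (j : ℕ) * (c' m * x (m : ℕ))
          = c j * (x (j : ℕ) * c' m) * x (m : ℕ) := by
            rw [mul_assoc (c j), ← mul_assoc (x (j:ℕ)), ← mul_assoc, ← mul_assoc]
        _ = c j * c' m * (x (j : ℕ) * x (m : ℕ)) := by rw [h1, ← mul_assoc, mul_assoc]
        _ = c j * c' m * (((((j : ℕ) + (m : ℕ)).choose (j : ℕ) : ℕ) : R) * x ((j : ℕ) + (m : ℕ))) := by
            rw [hxm _ j.isLt _ m.isLt]
        _ = _ := by rw [← mul_assoc]
    rw [hpt]
    by_cases hlt : (j : ℕ) + (m : ℕ) < p ^ n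
    · have hcond : ∀ t : Fin (p ^ n), ((j : ℕ) + (m : ℕ) = (t : ℕ)) ↔ ((⟨(j : ℕ) + (m : ℕ), hlt⟩ : Fin (p ^ n)) = t) := by
        intro t
        rw [Fin.ext_iff]
      rw [Finset.sum_congr rfl (fun t _ => if_congr (hcond t) rfl rfl)]
      rw [Finset.sum_ite_eq]
      simp
    · rw [hxz _ (le_of_not_gt hlt), mul_zero]
      symm
      apply Finset.sum_eq_zero
      intro t _
      rw [if_neg]
      intro hcontra
      exact hlt (hcontra ▸ t.isLt)
end
section
variable {R : Type*} [Ring R] (p n : ℕ) (hp : p.Prime) [CharP R p]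
  (K : Subring R) (x : ℕ → R)
  (hx0 : x 0 = 1) (hxz : ∀ k, p ^ n ≤ k → x k = 0)
  (hxm : ∀ i < p ^ n, ∀ j < p ^ n, x i * x j = ((i + j).choose i : R) * x (i + j))
  (hcomm : ∀ i < p ^ n, ∀ a ∈ K, x i * a = a * x i)

include hp hx0 hxz hxm hcomm in
lemma aux_conj1 : ∀ r : R,
    r ∈ Subring.closure ((K : Set R) ∪ Set.range fun i : Fin (p ^ n) => x (i : ℕ)) ↔
    ∃ c : Fin (p ^ n) → R, (∀ j, c j ∈ K) ∧ r = ∑ j : Fin (p ^ n), c j * x (j : ℕ) := by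
  classical
  haveI : NeZero (p ^ n) := ⟨pow_ne_zero n hp.ne_zero⟩
  have hind : ∀ (i : Fin (p ^ n)) (a : R), a ∈ K →
      ∃ c : Fin (p ^ n) → R, (∀ j, c j ∈ K) ∧
        a * x (i : ℕ) = ∑ j : Fin (p ^ n), c j * x (j : ℕ) := by
    intro i a ha
    refine ⟨fun j => if j = i then a else 0, ?_, ?_⟩
    · intro j
      simp only []
      by_cases h : j = i
      · rw [if_pos h]; exact ha
      · rw [if_neg h]; exact zero_mem K
    · have : ∀ j : Fin (p ^ n), (if j = i then a else 0) * x (j : ℕ)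
          = (if j = i then a * x (j : ℕ) else 0) := by
        intro j
        by_cases h : j = i
        · rw [if_pos h, if_pos h]
        · rw [if_neg h, if_neg h, zero_mul]
      rw [Finset.sum_congr rfl (fun j _ => this j)]
      rw [Finset.sum_ite_eq' Finset.univ i (fun j => a * x (j : ℕ))]
      simp
  intro r
  constructor
  · intro hr
    refine Subring.closure_induction ?_ ?_ ?_ ?_ ?_ ?_ hr
    · rintro r (hrK | ⟨i, rfl⟩)
      · obtain ⟨c, hcK, hs⟩ := hind 0 r hrK
        exact ⟨c, hcK, by rwa [Fin.val_zero, hx0, mul_one] at hs⟩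
      · obtain ⟨c, hcK, hs⟩ := hind i 1 (one_mem K)
        exact ⟨c, hcK, by rwa [one_mul] at hs⟩
    · exact ⟨fun _ => 0, fun _ => zero_mem K, by simp⟩
    · obtain ⟨c, hcK, hs⟩ := hind 0 1 (one_mem K)
      exact ⟨c, hcK, by rwa [Fin.val_zero, hx0, mul_one] at hs⟩
    · rintro a b _ _ ⟨c, hcK, rfl⟩ ⟨c', hcK', rfl⟩
      refine ⟨c + c', fun j => add_mem (hcK j) (hcK' j), ?_⟩
      rw [← Finset.sum_add_distrib]
      exact Finset.sum_congr rfl fun j _ => (add_mul _ _ _).symm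
    · rintro a _ ⟨c, hcK, rfl⟩
      refine ⟨-c, fun j => neg_mem (hcK j), ?_⟩
      rw [← Finset.sum_neg_distrib]
      exact Finset.sum_congr rfl fun j _ => (neg_mul _ _).symm
    · rintro a b _ _ ⟨c, hcK, rfl⟩ ⟨c', hcK', rfl⟩
      obtain ⟨c'', hK, he⟩ := aux_prodclosed p n K x hxz hxm hcomm c c' hcK hcK'
      exact ⟨c'', hK, he⟩
  · rintro ⟨c, hcK, rfl⟩
    apply Subring.sum_mem
    intro j _
    exact mul_mem (Subring.subset_closure (Or.inl (hcK j)))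
      (Subring.subset_closure (Or.inr ⟨j, rfl⟩))
end
section
lemma aux_indicator {R : Type*} [Ring R] (N : ℕ) (x : ℕ → R) (a : R) (i : Fin N) :
    ∑ j : Fin N, (if j = i then a else 0) * x (j : ℕ) = a * x (i : ℕ) := by
  classical
  have h : ∀ j : Fin N, (if j = i then a else 0) * x (j : ℕ)
      = (if j = i then a * x (j : ℕ) else 0) := by
    intro j
    by_cases h : j = i
    · rw [if_pos h, if_pos h]
    · rw [if_neg h, if_neg h, zero_mul]
  rw [Finset.sum_congr rfl (fun j _ => h j), Finset.sum_ite_eq' Finset.univ i]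
  simp

variable {R : Type*} [Ring R] (p n : ℕ) (hp : p.Prime)
  (δ : R → R) (hadd : ∀ a b : R, δ (a + b) = δ a + δ b)
  (hmul : ∀ a b : R, δ (a * b) = δ a * b + a * δ b)
  (K : Subring R) (hker : ∀ a : R, a ∈ K ↔ δ a = 0)
  (x : ℕ → R) (hx0 : x 0 = 1)
  (hxd : ∀ i, 1 ≤ i → i < p ^ n → δ (x i) = x (i - 1))
  (S : Subring R)
  (conj1 : ∀ r : R, r ∈ S ↔ ∃ c : Fin (p ^ n) → R,
      (∀ j, c j ∈ K) ∧ r = ∑ j : Fin (p ^ n), c j * x (j : ℕ))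

include hp hadd hmul hker hx0 hxd conj1 in
lemma aux_conj5A : ∀ a ∈ S, δ a ∈ S := by
  haveI : NeZero (p ^ n) := ⟨pow_ne_zero n hp.ne_zero⟩
  have hKS : ∀ a ∈ K, a ∈ S := by
    intro a ha
    rw [conj1]
    refine ⟨fun j => if j = 0 then a else 0, ?_, ?_⟩
    · intro j
      show (if j = 0 then a else 0) ∈ K
      by_cases h : j = 0
      · rw [if_pos h]; exact ha
      · rw [if_neg h]; exact zero_mem K
    · rw [aux_indicator (p ^ n) x a 0]
      simp [hx0]
  have hxS : ∀ i : Fin (p ^ n), x (i : ℕ) ∈ S := by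
    intro i
    rw [conj1]
    refine ⟨fun j => if j = i then 1 else 0, ?_, ?_⟩
    · intro j
      show (if j = i then (1:R) else 0) ∈ K
      by_cases h : j = i
      · rw [if_pos h]; exact one_mem K
      · rw [if_neg h]; exact zero_mem K
    · rw [aux_indicator (p ^ n) x 1 i, one_mul]
  intro a ha
  obtain ⟨c, hcK, rfl⟩ := (conj1 a).mp ha
  have hD : δ (∑ j : Fin (p ^ n), c j * x (j : ℕ))
      = ∑ j : Fin (p ^ n), δ (c j * x (j : ℕ)) :=
    map_sum (AddMonoidHom.mk' δ hadd) _ _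
  rw [hD]
  apply Subring.sum_mem
  intro j _
  have hterm : δ (c j * x (j : ℕ)) = c j * δ (x (j : ℕ)) := by
    rw [hmul, (hker (c j)).mp (hcK j), zero_mul, zero_add]
  rw [hterm]
  rcases Nat.eq_zero_or_pos (j : ℕ) with hj0 | hjpos
  · rw [hj0, hx0, aux_d1 δ hadd hmul, mul_zero]
    exact zero_mem S
  · rw [hxd _ hjpos j.isLt]
    apply mul_mem (hKS _ (hcK j))
    have hlt : (j : ℕ) - 1 < p ^ n := lt_of_le_of_lt (Nat.sub_le _ _) j.isLt
    exact hxS ⟨(j : ℕ) - 1, hlt⟩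

include hp hadd hmul hker hx0 hxd conj1 in
lemma aux_conj5B (hfield : IsField K) :
    ∀ I : TwoSidedIdeal S,
      (∀ a : S, a ∈ I → ∀ h : δ (a : R) ∈ S, (⟨δ (a : R), h⟩ : S) ∈ I) →
      I = ⊥ ∨ I = ⊤ := by
  classical
  haveI : NeZero (p ^ n) := ⟨pow_ne_zero n hp.ne_zero⟩
  have hSd := aux_conj5A p n hp δ hadd hmul K hker x hx0 hxd S conj1
  have hKS : ∀ a ∈ K, a ∈ S := by
    intro a ha
    rw [conj1]
    refine ⟨fun j => if j = 0 then a else 0, ?_, ?_⟩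
    · intro j
      show (if j = 0 then a else 0) ∈ K
      by_cases h : j = 0
      · rw [if_pos h]; exact ha
      · rw [if_neg h]; exact zero_mem K
    · rw [aux_indicator (p ^ n) x a 0]
      simp [hx0]
  intro I hstab
  by_cases hbot : I = ⊥
  · exact Or.inl hbot
  right
  set N := p ^ n with hN
  -- get a nonzero element of I
  have hex : ∃ a : S, a ∈ I ∧ a ≠ 0 := by
    by_contra h
    push_neg at h
    apply hbot
    apply TwoSidedIdeal.ext
    intro z
    rw [TwoSidedIdeal.mem_bot]
    exact ⟨fun hz => h z hz, fun hz => hz ▸ I.zero_mem⟩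
  obtain ⟨a, haI, hane⟩ := hex
  obtain ⟨c, hcK, hrep⟩ := (conj1 (a : R)).mp a.2
  set cc : ℕ → R := fun j => if h : j < N then c ⟨j, h⟩ else 0 with hcc
  have hccpos : ∀ (j : ℕ) (h : j < N), cc j = c ⟨j, h⟩ := fun j h => dif_pos h
  have hccneg : ∀ (j : ℕ), ¬ j < N → cc j = 0 := fun j h => dif_neg h
  have hccK : ∀ j, cc j ∈ K := by
    intro j
    by_cases h : j < N
    · rw [hccpos j h]; exact hcK _
    · rw [hccneg j h]; exact zero_mem K
  have hrep' : (a : R) = ∑ j ∈ Finset.range N, cc j * x j := by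
    rw [hrep, ← Fin.sum_univ_eq_sum_range (fun j => cc j * x j) N]
    apply Finset.sum_congr rfl
    intro j _
    rw [hccpos (j : ℕ) j.isLt]
  -- find the top nonzero coefficient
  have hcne : ∃ j, cc j ≠ 0 := by
    by_contra h
    push_neg at h
    apply hane
    apply Subtype.ext
    have hz : ∀ j ∈ Finset.range N, cc j * x j = 0 := fun j _ => by rw [h j, zero_mul]
    rw [hrep', Finset.sum_congr rfl hz, Finset.sum_const_zero]
    rfl
  obtain ⟨t0, ht0⟩ := hcne
  set T := (Finset.range N).filter (fun j => cc j ≠ 0) with hT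
  have hT0 : t0 ∈ T := by
    rw [hT, Finset.mem_filter, Finset.mem_range]
    refine ⟨?_, ht0⟩
    by_contra h
    exact ht0 (hccneg t0 h)
  have hTne : T.Nonempty := ⟨t0, hT0⟩
  set t := T.max' hTne with htdef
  have htT : t ∈ T := T.max'_mem hTne
  have htlt : t < N := Finset.mem_range.mp (Finset.mem_filter.mp htT).1
  have htne : cc t ≠ 0 := (Finset.mem_filter.mp htT).2
  have htmax : ∀ j, t < j → cc j = 0 := by
    intro j hj
    by_contra h
    have : j ∈ T := by
      rw [hT, Finset.mem_filter, Finset.mem_range]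
      constructor
      · by_contra h2
        exact h (hccneg j h2)
      · exact h
    exact absurd (Finset.le_max' T j this) (by omega)
  -- iterated derivative chain
  have hchain : ∀ s : ℕ, ∃ b : S, b ∈ I ∧
      (b : R) = ∑ j ∈ Finset.range N, (if j + s < N then cc (j + s) else 0) * x j := by
    intro s
    induction s with
    | zero =>
      refine ⟨a, haI, ?_⟩
      rw [hrep']
      apply Finset.sum_congr rfl
      intro j hj
      rw [Finset.mem_range] at hj
      rw [if_pos (by omega), Nat.add_zero]
    | succ s ih =>
      obtain ⟨b, hbI, hbrep⟩ := ih
      have hbd : δ (b : R) ∈ S := hSd _ b.2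
      refine ⟨⟨δ (b : R), hbd⟩, hstab b hbI hbd, ?_⟩
      show δ (b : R) = _
      rw [hbrep]
      have hD : δ (∑ j ∈ Finset.range N, (if j + s < N then cc (j + s) else 0) * x j)
          = ∑ j ∈ Finset.range N, δ ((if j + s < N then cc (j + s) else 0) * x j) :=
        map_sum (AddMonoidHom.mk' δ hadd) _ _
      rw [hD]
      have hterm : ∀ j, δ ((if j + s < N then cc (j + s) else 0) * x j)
          = (if j + s < N then cc (j + s) else 0) * δ (x j) := by
        intro j
        have hmem : (if j + s < N then cc (j + s) else 0) ∈ K := by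
          by_cases h : j + s < N
          · rw [if_pos h]; exact hccK _
          · rw [if_neg h]; exact zero_mem K
        rw [hmul, (hker _).mp hmem, zero_mul, zero_add]
      rw [Finset.sum_congr rfl (fun j _ => hterm j)]
      obtain ⟨M, hM⟩ : ∃ M, N = M + 1 := ⟨N - 1, by have := Nat.pos_of_ne_zero (NeZero.ne N); omega⟩
      rw [hM, Finset.sum_range_succ', Finset.sum_range_succ]
      have h0 : (if 0 + s < M + 1 then cc (0 + s) else 0) * δ (x 0) = 0 := by
        rw [hx0, aux_d1 δ hadd hmul, mul_zero]
      have htop : (if M + (s+1) < M + 1 then cc (M + (s+1)) else 0) * x M = 0 := by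
        rw [if_neg (by omega), zero_mul]
      rw [h0, htop, add_zero, add_zero]
      apply Finset.sum_congr rfl
      intro j hj
      rw [Finset.mem_range] at hj
      rw [hxd (j+1) (by omega) (by omega)]
      simp only [Nat.add_sub_cancel]
      congr 1
      by_cases h : j + 1 + s < M + 1
      · rw [if_pos h, if_pos (by omega)]
        congr 1
        omega
      · rw [if_neg h, if_neg (by omega)]
  obtain ⟨b, hbI, hbrep⟩ := hchain t
  have hbt : (b : R) = cc t := by
    rw [hbrep]
    obtain ⟨M, hM⟩ : ∃ M, N = M + 1 := ⟨N - 1, by have := Nat.pos_of_ne_zero (NeZero.ne N); omega⟩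
    rw [hM, Finset.sum_range_succ']
    have h0 : (if 0 + t < M + 1 then cc (0 + t) else 0) * x 0 = cc t := by
      rw [if_pos (by omega), hx0, mul_one, zero_add]
    rw [h0]
    have hz : ∀ j ∈ Finset.range M, (if j + 1 + t < M + 1 then cc (j + 1 + t) else 0) * x (j+1) = 0 := by
      intro j _
      by_cases h : j + 1 + t < M + 1
      · rw [if_pos h, htmax _ (by omega), zero_mul]
      · rw [if_neg h, zero_mul]
    rw [Finset.sum_congr rfl hz, Finset.sum_const_zero, zero_add]
  -- invert cc t in K
  have hctK : (⟨cc t, hccK t⟩ : K) ≠ 0 := by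
    intro h
    exact htne (by simpa using congrArg Subtype.val h)
  obtain ⟨u, hu⟩ := hfield.mul_inv_cancel hctK
  have huS : (u : R) ∈ S := hKS _ u.2
  have h1I : (1 : S) ∈ I := by
    have := I.mul_mem_right _ (⟨(u : R), huS⟩ : S) hbI
    have hbu : b * (⟨(u : R), huS⟩ : S) = 1 := by
      apply Subtype.ext
      show (b : R) * (u : R) = 1
      rw [hbt]
      simpa using congrArg Subtype.val hu
    rwa [hbu] at this
  exact TwoSidedIdeal.one_mem_iff I |>.mp h1I
end
section
open AddMonoidAlgebra in
lemma aux_commlistmul {R : Type*} [Ring R] {n : ℕ} (y : Fin n → R)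
    (hy : ∀ k l, Commute (y k) (y l)) (d d' : Fin n → ℕ) :
    ∀ l : List (Fin n), (l.map fun k => y k ^ (d k + d' k)).prod
      = (l.map fun k => y k ^ d k).prod * (l.map fun k => y k ^ d' k).prod := by
  intro l
  induction l with
  | nil => simp
  | cons k l ih =>
    simp only [List.map_cons, List.prod_cons, ih]
    have hcomP : Commute (y k ^ d' k) ((l.map fun k => y k ^ d k).prod) := by
      apply Commute.list_prod_right
      intro z hz
      simp only [List.mem_map] at hz
      obtain ⟨j, _, rfl⟩ := hz
      exact (hy k j).pow_pow _ _
    set P := (l.map fun k => y k ^ d k).prod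
    set P' := (l.map fun k => y k ^ d' k).prod
    calc (y k ^ (d k + d' k)) * (P * P')
        = y k ^ d k * (y k ^ d' k * (P * P')) := by rw [pow_add, mul_assoc]
      _ = y k ^ d k * ((y k ^ d' k * P) * P') := by rw [mul_assoc]
      _ = y k ^ d k * ((P * y k ^ d' k) * P') := by rw [hcomP.eq]
      _ = (y k ^ d k * P) * (y k ^ d' k * P') := by rw [mul_assoc P, ← mul_assoc]

lemma aux_listone {R : Type*} [Ring R] {n : ℕ} (y : Fin n → R) (k : Fin n) :
    ∀ l : List (Fin n), k ∉ l →
      (l.map fun j => y j ^ (Pi.single k (1 : ℕ) j)).prod = 1 := by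
  intro l
  induction l with
  | nil => simp
  | cons j l ih =>
    intro hk
    simp only [List.map_cons, List.prod_cons]
    have hjk : j ≠ k := fun h => hk (h ▸ List.mem_cons_self (a := j) (l := l))
    rw [Pi.single_eq_of_ne hjk, pow_zero, one_mul]
    exact ih (fun h => hk (List.mem_cons_of_mem j h))

lemma aux_listsingle {R : Type*} [Ring R] {n : ℕ} (y : Fin n → R) (k : Fin n) :
    ∀ l : List (Fin n), l.Nodup → k ∈ l →
      (l.map fun j => y j ^ (Pi.single k (1 : ℕ) j)).prod = y k := by
  intro l
  induction l with
  | nil => intro _ h; simp at h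
  | cons j l ih =>
    intro hnd hk
    simp only [List.map_cons, List.prod_cons]
    rcases List.mem_cons.mp hk with rfl | hmem
    · rw [Pi.single_eq_same, pow_one]
      rw [aux_listone y _ l (List.nodup_cons.mp hnd).1, mul_one]
    · have hjk : j ≠ k := by
        rintro rfl
        exact (List.nodup_cons.mp hnd).1 hmem
      rw [Pi.single_eq_of_ne hjk, pow_zero, one_mul]
      exact ih (List.nodup_cons.mp hnd).2 hmem
end
section
variable {R : Type*} [Ring R] (p n : ℕ) (hp : p.Prime) [CharP R p]
  (K : Subring R) (x : ℕ → R)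
  (hx0 : x 0 = 1) (hxz : ∀ k, p ^ n ≤ k → x k = 0)
  (hxm : ∀ i < p ^ n, ∀ j < p ^ n, x i * x j = ((i + j).choose i : R) * x (i + j))
  (hcomm : ∀ i < p ^ n, ∀ a ∈ K, x i * a = a * x i)

include hp hx0 hxz hxm hcomm in
lemma aux_conj4
    (hLI : ∀ c : Fin (p ^ n) → R, (∀ j, c j ∈ K) →
      ∑ j : Fin (p ^ n), c j * x (j : ℕ) = 0 → ∀ j, c j = 0)
    (S : Subring R)
    (conj1 : ∀ r : R, r ∈ S ↔ ∃ c : Fin (p ^ n) → R,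
      (∀ j, c j ∈ K) ∧ r = ∑ j : Fin (p ^ n), c j * x (j : ℕ)) :
    ∃ e : RingQuot (fun a b : AddMonoidAlgebra K (Fin n → ℕ) =>
        ∃ k : Fin n, a = (AddMonoidAlgebra.single (Pi.single k 1) (1 : K)) ^ p ∧ b = 0) ≃+* S,
      (∀ a : K, ((e (RingQuot.mkRingHom _ (AddMonoidAlgebra.single 0 a)) : S) : R) = (a : R)) ∧
      (∀ k : Fin n, ((e (RingQuot.mkRingHom _
          (AddMonoidAlgebra.single (Pi.single k 1) (1 : K))) : S) : R) = x (p ^ (k : ℕ))) := by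
  classical
  haveI : NeZero (p ^ n) := ⟨pow_ne_zero n hp.ne_zero⟩
  haveI := Fact.mk hp
  set rel : AddMonoidAlgebra K (Fin n → ℕ) → AddMonoidAlgebra K (Fin n → ℕ) → Prop :=
    fun a b => ∃ k : Fin n, a = (AddMonoidAlgebra.single (Pi.single k 1) (1 : K)) ^ p ∧ b = 0
    with hrel
  set y : Fin n → R := fun k => x (p ^ (k : ℕ)) with hy
  have hycomm : ∀ k l : Fin n, Commute (y k) (y l) := fun k l => aux_xcomm p n x hxz hxm _ _
  have hyk_lt : ∀ k : Fin n, p ^ (k : ℕ) < p ^ n := fun k => Nat.pow_lt_pow_right hp.one_lt k.isLt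
  set xl : (Fin n → ℕ) → R := fun d => ((List.finRange n).map fun k => y k ^ d k).prod with hxl
  have hxl_mul : ∀ d d', xl (d + d') = xl d * xl d' := fun d d' =>
    aux_commlistmul y hycomm d d' (List.finRange n)
  have hxl_zero : xl 0 = 1 := by
    rw [hxl]
    apply List.prod_eq_one
    intro z hz
    simp only [List.mem_map] at hz
    obtain ⟨j, _, rfl⟩ := hz
    exact pow_zero _
  set g : Multiplicative (Fin n → ℕ) →* R :=
    { toFun := fun d => xl (Multiplicative.toAdd d),
      map_one' := hxl_zero,
      map_mul' := fun d d' => hxl_mul _ _ } with hg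
  have hxlcommK : ∀ (a : K) (d : Fin n → ℕ), Commute (a : R) (xl d) := by
    intro a d
    apply Commute.list_prod_right
    intro z hz
    simp only [List.mem_map] at hz
    obtain ⟨j, _, rfl⟩ := hz
    exact Commute.pow_right ((hcomm _ (hyk_lt j) a a.2).symm) _
  set φ : AddMonoidAlgebra K (Fin n → ℕ) →+* R :=
    AddMonoidAlgebra.liftNCRingHom (K.subtype) g (fun a d => hxlcommK a _) with hφ
  have hφs : ∀ (d : Fin n → ℕ) (a : K), φ (AddMonoidAlgebra.single d a) = (a : R) * xl d :=
    fun d a => AddMonoidAlgebra.liftNC_single _ _ _ _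
  have hXk : ∀ k : Fin n, φ (AddMonoidAlgebra.single (Pi.single k 1) (1 : K)) = y k := by
    intro k
    rw [hφs, OneMemClass.coe_one, one_mul, hxl]
    exact aux_listsingle y k (List.finRange n) (List.nodup_finRange n) (List.mem_finRange k)
  have hrelresp : ∀ ⦃a b : AddMonoidAlgebra K (Fin n → ℕ)⦄, rel a b → φ a = φ b := by
    rintro a b ⟨k, rfl, rfl⟩
    rw [map_pow, map_zero, hXk]
    exact aux_xpow_p p n hp x hx0 hxz hxm (k : ℕ)
  set ψ : RingQuot rel →+* R := RingQuot.lift ⟨φ, hrelresp⟩ with hψ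
  have hψmk : ∀ f, ψ (RingQuot.mkRingHom rel f) = φ f := fun f =>
    RingQuot.lift_mkRingHom_apply φ hrelresp f
  -- digits
  set Dext : (Fin n → ℕ) → ℕ → ℕ := fun d k => if h : k < n then d ⟨k, h⟩ else 0 with hDext
  have hDe : ∀ (d : Fin n → ℕ) (k : ℕ) (h : k < n), Dext d k = d ⟨k, h⟩ := fun d k h => dif_pos h
  have hDe' : ∀ (d : Fin n → ℕ) (k : ℕ), ¬ k < n → Dext d k = 0 := fun d k h => dif_neg h
  set val : (Fin n → ℕ) → ℕ := fun d => ∑ k ∈ Finset.range n, Dext d k * p ^ k with hval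
  have hDlt : ∀ d : Fin n → ℕ, (∀ k, d k < p) → ∀ k, Dext d k < p := by
    intro d hd k
    by_cases h : k < n
    · rw [hDe d k h]; exact hd _
    · rw [hDe' d k h]; exact hp.pos
  have hval_lt : ∀ d, (∀ k, d k < p) → val d < p ^ n := fun d hd =>
    aux_sumlt p hp.pos _ (hDlt d hd) n
  have hxl_eq : ∀ d : Fin n → ℕ, (∀ k, d k < p) →
      xl d = ((∏ k ∈ Finset.range n, (Dext d k).factorial : ℕ) : R) * x (val d) := by
    intro d hd
    have hmap : (List.finRange n).map (fun k => y k ^ d k)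
        = (List.range n).map (fun k => x (p ^ k) ^ Dext d k) := by
      rw [← List.map_coe_finRange_eq_range, List.map_map]
      apply List.map_congr_left
      intro k _
      show y k ^ d k = x (p ^ (k : ℕ)) ^ Dext d (k : ℕ)
      rw [hDe d (k : ℕ) k.isLt, Fin.eta]
    show ((List.finRange n).map fun k => y k ^ d k).prod = _
    rw [hmap]
    exact aux_prodML p n hp x hx0 hxz hxm n le_rfl _ (hDlt d hd)
  have hval_inj : ∀ d d' : Fin n → ℕ, (∀ k, d k < p) → (∀ k, d' k < p) →
      val d = val d' → d = d' := by
    intro d d' hd hd' h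
    funext k
    have h1 : val d / p ^ (k : ℕ) % p = Dext d (k : ℕ) :=
      aux_extract p hp.pos n (Dext d) (hDlt d hd) (k : ℕ) k.isLt
    have h2 : val d' / p ^ (k : ℕ) % p = Dext d' (k : ℕ) :=
      aux_extract p hp.pos n (Dext d') (hDlt d' hd') (k : ℕ) k.isLt
    have e1 : Dext d (k : ℕ) = d k := by rw [hDe d _ k.isLt, Fin.eta]
    have e2 : Dext d' (k : ℕ) = d' k := by rw [hDe d' _ k.isLt, Fin.eta]
    rw [← e1, ← e2, ← h1, ← h2, h]
  -- factorial product invertibility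
  have hfactinv : ∀ d : Fin n → ℕ, (∀ k, d k < p) → ∃ v : ℕ,
      ((∏ k ∈ Finset.range n, (Dext d k).factorial : ℕ) : R) * (v : R) = 1 := by
    intro d hd
    have hFne : (((∏ k ∈ Finset.range n, (Dext d k).factorial : ℕ) : ZMod p)) ≠ 0 := by
      rw [Nat.cast_prod]
      apply Finset.prod_ne_zero_iff.mpr
      intro k _
      rw [Ne, ZMod.natCast_eq_zero_iff]
      intro hdvd
      have := (Nat.Prime.dvd_factorial hp).mp hdvd
      have := hDlt d hd k
      omega
    refine ⟨(((∏ k ∈ Finset.range n, (Dext d k).factorial : ℕ) : ZMod p))⁻¹.val, ?_⟩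
    rw [← Nat.cast_mul, ← Nat.cast_one]
    apply aux_cast p
    rw [Nat.cast_mul, Nat.cast_one, ZMod.natCast_val, ZMod.cast_id]
    exact mul_inv_cancel₀ hFne
  -- kill non-reduced monomials
  have hkill : ∀ (d : Fin n → ℕ) (a : K) (k : Fin n), p ≤ d k →
      RingQuot.mkRingHom rel (AddMonoidAlgebra.single d a) = 0 := by
    intro d a k hk
    have hd : d = Function.update d k (d k - p) + p • Pi.single k 1 := by
      funext j
      by_cases hj : j = k
      · subst hj
        simp only [Pi.add_apply, Function.update_self, Pi.smul_apply, Pi.single_eq_same,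
          smul_eq_mul, mul_one]
        omega
      · simp only [Pi.add_apply, Function.update_of_ne hj, Pi.smul_apply,
          Pi.single_eq_of_ne hj, smul_eq_mul, mul_zero, add_zero]
    have hsplit : AddMonoidAlgebra.single d a
        = AddMonoidAlgebra.single (Function.update d k (d k - p)) a
          * (AddMonoidAlgebra.single (Pi.single k 1) (1 : K)) ^ p := by
      rw [AddMonoidAlgebra.single_pow, AddMonoidAlgebra.single_mul_single, one_pow, mul_one, ← hd]
    rw [hsplit, map_mul]
    have hz : RingQuot.mkRingHom rel ((AddMonoidAlgebra.single (Pi.single k 1) (1 : K)) ^ p)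
        = 0 := by
      rw [RingQuot.mkRingHom_rel ⟨k, rfl, rfl⟩, map_zero]
    rw [hz, mul_zero]
  -- injectivity
  have hinj : Function.Injective ψ := by
    rw [injective_iff_map_eq_zero]
    intro z hz
    obtain ⟨f, rfl⟩ := RingQuot.mkRingHom_surjective rel z
    set T := f.coeff.support.filter (fun d => ∀ k, d k < p) with hT
    have hmkf : RingQuot.mkRingHom rel f
        = ∑ d ∈ T, RingQuot.mkRingHom rel (AddMonoidAlgebra.single d (f.coeff d)) := by
      conv_lhs => rw [← AddMonoidAlgebra.sum_coeff_single f]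
      rw [Finsupp.sum, map_sum,
        ← Finset.sum_filter_add_sum_filter_not f.coeff.support (fun d => ∀ k, d k < p)]
      have hzero : ∑ d ∈ f.coeff.support.filter (fun d => ¬ ∀ k, d k < p),
          RingQuot.mkRingHom rel (AddMonoidAlgebra.single d (f.coeff d)) = 0 := by
        apply Finset.sum_eq_zero
        intro d hd
        rw [Finset.mem_filter] at hd
        push_neg at hd
        obtain ⟨k, hk⟩ := hd.2
        exact hkill d (f.coeff d) k hk
      rw [hzero, add_zero]
    have hψf : ψ (RingQuot.mkRingHom rel f) = ∑ d ∈ T,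
        ((f.coeff d : R) * ((∏ k ∈ Finset.range n, (Dext d k).factorial : ℕ) : R)) * x (val d) := by
      rw [hmkf, map_sum]
      apply Finset.sum_congr rfl
      intro d hd
      have hdred : ∀ k, d k < p := (Finset.mem_filter.mp hd).2
      rw [hψmk, hφs, hxl_eq d hdred, ← mul_assoc]
    set c : Fin (p ^ n) → R := fun j => ∑ d ∈ T,
      (if val d = (j : ℕ)
        then (f.coeff d : R) * ((∏ k ∈ Finset.range n, (Dext d k).factorial : ℕ) : R) else 0) with hc
    have hcK : ∀ j, c j ∈ K := by
      intro j
      apply Subring.sum_mem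
      intro d _
      by_cases h : val d = (j : ℕ)
      · rw [if_pos h]; exact mul_mem (SetLike.coe_mem (f.coeff d)) (natCast_mem K _)
      · rw [if_neg h]; exact zero_mem K
    have hsum : ∑ j : Fin (p ^ n), c j * x (j : ℕ) = 0 := by
      have heq : ∑ j : Fin (p ^ n), c j * x (j : ℕ) = ∑ d ∈ T,
          ((f.coeff d : R) * ((∏ k ∈ Finset.range n, (Dext d k).factorial : ℕ) : R)) * x (val d) := by
        simp only [hc, Finset.sum_mul, ite_mul, zero_mul]
        rw [Finset.sum_comm]
        apply Finset.sum_congr rfl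
        intro d hdT
        have hdred : ∀ k, d k < p := (Finset.mem_filter.mp hdT).2
        have hvd : val d < p ^ n := hval_lt d hdred
        have hcond : ∀ j : Fin (p ^ n), (val d = (j : ℕ)) ↔ ((⟨val d, hvd⟩ : Fin (p ^ n)) = j) :=
          fun j => ⟨fun h => Fin.ext h, fun h => h ▸ rfl⟩
        rw [Finset.sum_congr rfl (fun j _ => if_congr (hcond j) rfl rfl), Finset.sum_ite_eq]
        simp
      rw [heq, ← hψf, hz]
    have hc0 := hLI c hcK hsum
    have hT0 : ∀ d ∈ T, (f.coeff d : R) = 0 := by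
      intro d hdT
      have hdred : ∀ k, d k < p := (Finset.mem_filter.mp hdT).2
      have hvd : val d < p ^ n := hval_lt d hdred
      have hthis := hc0 ⟨val d, hvd⟩
      simp only [hc] at hthis
      have hone : ∑ d' ∈ T, (if val d' = ((⟨val d, hvd⟩ : Fin (p ^ n)) : ℕ)
          then (f.coeff d' : R) * ((∏ k ∈ Finset.range n, (Dext d' k).factorial : ℕ) : R) else 0)
          = (f.coeff d : R) * ((∏ k ∈ Finset.range n, (Dext d k).factorial : ℕ) : R) := by
        rw [Finset.sum_eq_single_of_mem d hdT]
        · rw [if_pos rfl]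
        · intro d' hd' hne
          rw [if_neg]
          intro hcontra
          exact hne (hval_inj d' d (Finset.mem_filter.mp hd').2 hdred hcontra)
      rw [hone] at hthis
      obtain ⟨v, hv⟩ := hfactinv d hdred
      have := congrArg (fun w => w * (v : R)) hthis
      simpa [mul_assoc, hv] using this
    rw [hmkf]
    apply Finset.sum_eq_zero
    intro d hdT
    have hfd : f.coeff d = 0 := Subtype.ext (hT0 d hdT)
    rw [hfd]
    simp
  -- membership of range in S
  have hKS : ∀ a ∈ K, a ∈ S := by
    intro a ha
    rw [conj1]
    refine ⟨fun j => if j = 0 then a else 0, ?_, ?_⟩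
    · intro j
      show (if j = 0 then a else 0) ∈ K
      by_cases h : j = 0
      · rw [if_pos h]; exact ha
      · rw [if_neg h]; exact zero_mem K
    · rw [aux_indicator (p ^ n) x a 0]
      simp [hx0]
  have hxS : ∀ i : Fin (p ^ n), x (i : ℕ) ∈ S := by
    intro i
    rw [conj1]
    refine ⟨fun j => if j = i then 1 else 0, ?_, ?_⟩
    · intro j
      show (if j = i then (1 : R) else 0) ∈ K
      by_cases h : j = i
      · rw [if_pos h]; exact one_mem K
      · rw [if_neg h]; exact zero_mem K
    · rw [aux_indicator (p ^ n) x 1 i, one_mul]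
  have hyS : ∀ k : Fin n, y k ∈ S := fun k => hxS ⟨p ^ (k : ℕ), hyk_lt k⟩
  have hxlS : ∀ d : Fin n → ℕ, xl d ∈ S := by
    intro d
    rw [hxl]
    apply Subring.list_prod_mem
    intro z hz
    simp only [List.mem_map] at hz
    obtain ⟨j, _, rfl⟩ := hz
    exact pow_mem (hyS j) _
  have hmem : ∀ z, ψ z ∈ S := by
    intro z
    obtain ⟨f, rfl⟩ := RingQuot.mkRingHom_surjective rel z
    rw [hψmk]
    induction f using AddMonoidAlgebra.induction with
    | zero => rw [map_zero]; exact zero_mem S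
    | single_add d a f' _ _ hf' =>
      rw [map_add]
      refine add_mem ?_ hf'
      rw [show ((AddMonoidAlgebra.single d a : AddMonoidAlgebra K (Fin n → ℕ)))
          = AddMonoidAlgebra.single d a from rfl, hφs]
      exact mul_mem (hKS _ (SetLike.coe_mem a)) (hxlS d)
  -- surjectivity onto S
  have hsurj : ∀ r ∈ S, ∃ z, ψ z = r := by
    intro r hr
    obtain ⟨c, hcK, rfl⟩ := (conj1 r).mp hr
    have hterm : ∀ j : Fin (p ^ n), ∃ z, ψ z = c j * x (j : ℕ) := by
      intro j
      set d : Fin n → ℕ := fun k => (j : ℕ) / p ^ (k : ℕ) % p with hd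
      have hdred : ∀ k, d k < p := fun k => Nat.mod_lt _ hp.pos
      have hvald : val d = (j : ℕ) := by
        show (∑ k ∈ Finset.range n, Dext d k * p ^ k) = (j : ℕ)
        have hco : ∀ k ∈ Finset.range n, Dext d k * p ^ k = ((j : ℕ) / p ^ k % p) * p ^ k := by
          intro k hk
          rw [Finset.mem_range] at hk
          rw [hDe d k hk]
        rw [Finset.sum_congr rfl hco, aux_digitsum p hp.pos n (j : ℕ) j.isLt]
      obtain ⟨v, hv⟩ := hfactinv d hdred
      refine ⟨RingQuot.mkRingHom rel (AddMonoidAlgebra.single 0 ⟨c j, hcK j⟩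
        * AddMonoidAlgebra.single d ⟨(v : R), natCast_mem K v⟩), ?_⟩
      rw [hψmk, map_mul, hφs, hφs, hxl_zero, mul_one, hxl_eq d hdred, hvald]
      show c j * ((v : R) * (((∏ k ∈ Finset.range n, (Dext d k).factorial : ℕ) : R) * x (j : ℕ)))
        = c j * x (j : ℕ)
      have hvF : ((v : ℕ) : R) * (((∏ k ∈ Finset.range n, (Dext d k).factorial : ℕ)) : R) = 1 := by
        rw [(Nat.cast_commute v _).eq]
        exact hv
      rw [← mul_assoc ((v : ℕ) : R), hvF, one_mul]
    choose zf hzf using hterm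
    refine ⟨∑ j : Fin (p ^ n), zf j, ?_⟩
    rw [map_sum]
    exact Finset.sum_congr rfl fun j _ => hzf j
  -- assemble the equivalence
  have hbij : Function.Bijective (ψ.codRestrict S hmem) := by
    constructor
    · intro z z' h
      exact hinj (congrArg Subtype.val h)
    · rintro ⟨r, hr⟩
      obtain ⟨z, hz⟩ := hsurj r hr
      exact ⟨z, Subtype.ext hz⟩
  refine ⟨RingEquiv.ofBijective _ hbij, ?_, ?_⟩
  · intro a
    show ((ψ.codRestrict S hmem) (RingQuot.mkRingHom rel (AddMonoidAlgebra.single 0 a)) : R)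
      = (a : R)
    show ψ (RingQuot.mkRingHom rel (AddMonoidAlgebra.single 0 a)) = (a : R)
    rw [hψmk, hφs, hxl_zero, mul_one]
  · intro k
    show ((ψ.codRestrict S hmem) (RingQuot.mkRingHom rel
        (AddMonoidAlgebra.single (Pi.single k 1) (1 : K))) : R) = x (p ^ (k : ℕ))
    show ψ (RingQuot.mkRingHom rel (AddMonoidAlgebra.single (Pi.single k 1) (1 : K)))
      = x (p ^ (k : ℕ))
    rw [hψmk, hXk]
end
theorem stmt9 {R : Type*} [Ring R] (p : ℕ) (hp : p.Prime) [CharP R p] (n : ℕ)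
    (δ : R → R) (hδ : IsDerivation δ)
    (K : Subring R) (hK : (K : Set R) = {a : R | δ a = 0})
    (x : ℕ → R) (hx : IsIterativeDescent p n δ x)
    (hcomm : ∀ i < p ^ n, ∀ a ∈ K, x i * a = a * x i)
    -- the inverse of `m!` in `𝔽_p`, transported to `R`
    (finv : ℕ → R) (hfinv : ∀ m : ℕ, finv m =
      ZMod.castHom (dvd_refl p) R ((m.factorial : ZMod p)⁻¹))
    -- `S` is the `K`-subalgebra of `R` generated by the elements `x^{[i]}`
    (S : Subring R)
    (hS : S = Subring.closure ((K : Set R) ∪ Set.range fun i : Fin (p ^ n) => x (i : ℕ))) :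
    -- (1) `S = ⊕_{i=0}^{p^n−1} K x^{[i]}` ...
    (∀ r : R, r ∈ S ↔ ∃ c : Fin (p ^ n) → R,
        (∀ j, c j ∈ K) ∧ r = ∑ j : Fin (p ^ n), c j * x (j : ℕ)) ∧
    (∀ c c' : Fin (p ^ n) → R, (∀ j, c j ∈ K) → (∀ j, c' j ∈ K) →
        (∑ j : Fin (p ^ n), c j * x (j : ℕ)) = ∑ j : Fin (p ^ n), c' j * x (j : ℕ) → c = c') ∧
    -- ... with `x^{[i]} = Π_k x_k^{i_k}/i_k!` for the `p`-adic digits `i_k` of `i`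
    (∀ i : ℕ, 1 ≤ i → i < p ^ n →
        x i = (((List.range n).map fun k =>
          finv (i / p ^ k % p) * (x (p ^ k)) ^ (i / p ^ k % p))).prod) ∧
    -- ... and `S` is isomorphic as a `K`-algebra to `K[X_0,…,X_{n−1}]/(X_0^p,…,X_{n−1}^p)`
    -- via `X_k ↦ x_k := x^{[p^k]}`
    (∃ e : RingQuot (fun a b : AddMonoidAlgebra K (Fin n → ℕ) =>
          ∃ k : Fin n, a = (AddMonoidAlgebra.single (Pi.single k 1) (1 : K)) ^ p ∧ b = 0) ≃+* S,
      (∀ a : K, ((e (RingQuot.mkRingHom _ (AddMonoidAlgebra.single 0 a)) : S) : R) = (a : R)) ∧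
      (∀ k : Fin n, ((e (RingQuot.mkRingHom _
          (AddMonoidAlgebra.single (Pi.single k 1) (1 : K))) : S) : R) = x (p ^ (k : ℕ)))) ∧
    -- (2) if `K` is a field then the restriction of `δ` to `S` is a simple derivation
    (IsField K →
      (∀ a ∈ S, δ a ∈ S) ∧
      ∀ I : TwoSidedIdeal S, (∀ a : S, a ∈ I → ∀ h : δ (a : R) ∈ S, (⟨δ (a : R), h⟩ : S) ∈ I) →
        I = ⊥ ∨ I = ⊤) := by
  classical
  obtain ⟨⟨hxz, hxm⟩, hx0, hxd⟩ := hx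
  obtain ⟨hadd, hmul⟩ := hδ
  have hker : ∀ a : R, a ∈ K ↔ δ a = 0 := fun a => by
    rw [← SetLike.mem_coe, hK]; rfl
  -- conjunct 1
  have conj1 : ∀ r : R, r ∈ S ↔ ∃ c : Fin (p ^ n) → R,
      (∀ j, c j ∈ K) ∧ r = ∑ j : Fin (p ^ n), c j * x (j : ℕ) := by
    rw [hS]
    exact aux_conj1 p n hp K x hx0 hxz hxm hcomm
  -- linear independence
  have hLI : ∀ c : Fin (p ^ n) → R, (∀ j, c j ∈ K) →
      ∑ j : Fin (p ^ n), c j * x (j : ℕ) = 0 → ∀ j, c j = 0 := by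
    intro c hcK hsum
    set cN : ℕ → R := fun j => if h : j < p ^ n then c ⟨j, h⟩ else 0 with hcN
    have hcNpos : ∀ (j : ℕ) (h : j < p ^ n), cN j = c ⟨j, h⟩ := fun j h => dif_pos h
    have hcNneg : ∀ (j : ℕ), ¬ j < p ^ n → cN j = 0 := fun j h => dif_neg h
    have hdel : ∀ j, δ (cN j) = 0 := by
      intro j
      by_cases h : j < p ^ n
      · rw [hcNpos j h]; exact (hker _).mp (hcK _)
      · rw [hcNneg j h]
        have h0 := hadd 0 0
        rw [add_zero] at h0
        have h2 : δ 0 + 0 = δ 0 + δ 0 := by rw [add_zero]; exact h0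
        exact (add_left_cancel h2).symm
    have hsN : ∑ j ∈ Finset.range (p ^ n), cN j * x j = 0 := by
      rw [← Fin.sum_univ_eq_sum_range (fun j => cN j * x j) (p ^ n)]
      rw [← hsum]
      exact Finset.sum_congr rfl fun j _ => by rw [hcNpos (j : ℕ) j.isLt]
    intro j
    have := aux_LI p n δ hadd hmul x hx0 hxd (p ^ n) le_rfl cN hdel hsN (j : ℕ) j.isLt
    rwa [hcNpos (j : ℕ) j.isLt] at this
  refine ⟨conj1, ?_, ?_, ?_, ?_⟩
  · -- conjunct 2: uniqueness
    intro c c' hcK hcK' heq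
    funext j
    have hsub : ∑ j : Fin (p ^ n), (c j - c' j) * x (j : ℕ) = 0 := by
      have : ∀ j : Fin (p ^ n), (c j - c' j) * x (j : ℕ)
          = c j * x (j : ℕ) - c' j * x (j : ℕ) := fun j => sub_mul _ _ _
      rw [Finset.sum_congr rfl (fun j _ => this j), Finset.sum_sub_distrib, heq, sub_self]
    have := hLI (fun j => c j - c' j) (fun j => sub_mem (hcK j) (hcK' j)) hsub j
    exact sub_eq_zero.mp this
  · -- conjunct 3: product formula
    intro i _ hi
    exact aux_c3 p n hp x hx0 hxz hxm finv hfinv i hi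
  · -- conjunct 4: isomorphism
    exact aux_conj4 p n hp K x hx0 hxz hxm hcomm hLI S conj1
  · -- conjunct 5
    intro hfield
    exact ⟨aux_conj5A p n hp δ hadd hmul K hker x hx0 hxd S conj1,
      aux_conj5B p n hp δ hadd hmul K hker x hx0 hxd S conj1 hfield⟩
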